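/- arXiv:2006.01107 — 2 statements merged into one kernel-verified Lean document; each statement's English description precedes it below -/
import Mathlib

section
/- Let (F_p)_{p≥0} be a filtration and let (Z_p)_{p≥1} be an (F_p)-adapted real process that is conditionally σ-subgaussian given (F_p). Let S_t = Σ_{p=1}^t Z_p. Then for any λ > 0 and any δ ∈ (0,1), with probability at least 1 − δ, simultaneously for all t ≥ 1: S_t < (1/λ)·log(1/δ) + λ t σ²/2. -/
open MeasureTheory Real Finset

/-- If `f` is nonnegative, integrable and `m`-measurable, `g` is nonnegative and integrable,
and `μ[g|m] ≤ C` a.e., then `f * g` is integrable. -/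
lemma integrable_mul_of_condexp_le {Ω : Type*} {m m0 : MeasurableSpace Ω} {μ : Measure Ω}
    [IsProbabilityMeasure μ] (hm : m ≤ m0)
    {f g : Ω → ℝ} (hf : StronglyMeasurable[m] f) (hfi : Integrable f μ)
    (hf0 : ∀ ω, 0 ≤ f ω) (hgi : Integrable g μ) (hg0 : ∀ ω, 0 ≤ g ω)
    {C : ℝ} (hC : μ[g|m] ≤ᵐ[μ] fun _ => C) :
    Integrable (f * g) μ := by
  have hC0 : 0 ≤ C := by
    have h1 : 0 ≤ᵐ[μ] μ[g|m] := condExp_nonneg (Filter.Eventually.of_forall hg0)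
    obtain ⟨ω, h1, h2⟩ := (h1.and hC).exists
    exact h1.trans h2
  set fn : ℕ → Ω → ℝ := fun n ω => min (f ω) n with hfn_def
  have hfn_meas : ∀ n, StronglyMeasurable[m] (fn n) := fun n =>
    (continuous_id.min continuous_const).comp_stronglyMeasurable hf
  have hfn0 : ∀ n ω, 0 ≤ fn n ω := fun n ω => le_min (hf0 ω) (Nat.cast_nonneg n)
  have hfn_le : ∀ n ω, fn n ω ≤ f ω := fun n ω => min_le_left _ _
  have hfn_bdd : ∀ n : ℕ, ∃ D, ∀ ω, ‖fn n ω‖ ≤ D := fun n =>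
    ⟨n, fun ω => by rw [Real.norm_of_nonneg (hfn0 n ω)]; exact min_le_right _ _⟩
  have hfn_int : ∀ n, Integrable (fn n * g) μ := fun n =>
    hgi.bdd_mul ((hfn_meas n).mono hm).aestronglyMeasurable
      (Filter.Eventually.of_forall (hfn_bdd n).choose_spec)
  have key : ∀ n, ∫ ω, (fn n * g) ω ∂μ ≤ C * ∫ ω, f ω ∂μ := by
    intro n
    have h1 : μ[fn n * g|m] =ᵐ[μ] fn n * μ[g|m] :=
      condExp_mul_of_stronglyMeasurable_left (hfn_meas n) (hfn_int n) hgi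
    have h2 : Integrable (fn n * μ[g|m]) μ :=
      integrable_condExp.bdd_mul ((hfn_meas n).mono hm).aestronglyMeasurable
        (Filter.Eventually.of_forall (hfn_bdd n).choose_spec)
    calc ∫ ω, (fn n * g) ω ∂μ
        = ∫ ω, (μ[fn n * g|m]) ω ∂μ := (integral_condExp hm).symm
      _ = ∫ ω, (fn n * μ[g|m]) ω ∂μ := integral_congr_ae h1
      _ ≤ ∫ ω, C * f ω ∂μ := by
          refine integral_mono_ae h2 (hfi.const_mul C) ?_
          filter_upwards [hC] with ω hω
          calc fn n ω * (μ[g|m]) ω ≤ fn n ω * C := mul_le_mul_of_nonneg_left hω (hfn0 n ω)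
            _ ≤ f ω * C := mul_le_mul_of_nonneg_right (hfn_le n ω) hC0
            _ = C * f ω := mul_comm _ _
      _ = C * ∫ ω, f ω ∂μ := integral_const_mul _ _
  refine ⟨(hf.mono hm).aestronglyMeasurable.mul hgi.1, ?_⟩
  have hnn : 0 ≤ᵐ[μ] f * g :=
    Filter.Eventually.of_forall fun ω => mul_nonneg (hf0 ω) (hg0 ω)
  rw [hasFiniteIntegral_iff_ofReal hnn]
  have hsup : ∀ ω, (⨆ n, ENNReal.ofReal ((fn n * g) ω)) = ENNReal.ofReal ((f * g) ω) := by
    intro ω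
    refine le_antisymm (iSup_le fun n => ENNReal.ofReal_le_ofReal
      (mul_le_mul_of_nonneg_right (hfn_le n ω) (hg0 ω))) ?_
    refine le_iSup_of_le ⌈f ω⌉₊ (le_of_eq ?_)
    have h : fn ⌈f ω⌉₊ ω = f ω := min_eq_left (Nat.le_ceil _)
    simp only [Pi.mul_apply, h]
  calc ∫⁻ ω, ENNReal.ofReal ((f * g) ω) ∂μ
      = ∫⁻ ω, ⨆ n, ENNReal.ofReal ((fn n * g) ω) ∂μ := by simp_rw [hsup]
    _ = ⨆ n, ∫⁻ ω, ENNReal.ofReal ((fn n * g) ω) ∂μ := by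
        refine lintegral_iSup' (fun n => ?_) (Filter.Eventually.of_forall fun ω m n hmn => ?_)
        · exact ((hfn_int n).1.aemeasurable.ennreal_ofReal)
        · exact ENNReal.ofReal_le_ofReal
            (mul_le_mul_of_nonneg_right (min_le_min le_rfl (Nat.cast_le.2 hmn)) (hg0 ω))
    _ ≤ ENNReal.ofReal (C * ∫ ω, f ω ∂μ) := by
        refine iSup_le fun n => ?_
        rw [← ofReal_integral_eq_lintegral_ofReal (hfn_int n)
          (Filter.Eventually.of_forall fun ω => mul_nonneg (hfn0 n ω) (hg0 ω))]
        exact ENNReal.ofReal_le_ofReal (key n)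
    _ < ⊤ := ENNReal.ofReal_lt_top

/-- **Uniform-in-time tail bound for sums of conditionally subgaussian increments**
(Lemma 7 of Russo–Van Roy). If `(Z p)_{p ≥ 1}` is adapted to the filtration `𝓕`
and conditionally `σ`-subgaussian given `𝓕`, then for any `l > 0` and `δ ∈ (0,1)`,
with probability at least `1 - δ`, simultaneously for all `t ≥ 1`,
`S t < (1/l) log (1/δ) + l t σ² / 2` where `S t = ∑_{p=1}^t Z p`. -/
theorem uniform_subgaussian_tail_bound
    {Ω : Type*} {m0 : MeasurableSpace Ω} (μ : Measure Ω) [IsProbabilityMeasure μ]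
    (𝓕 : Filtration ℕ m0) (Z : ℕ → Ω → ℝ) (σ : ℝ) (hσ : 0 ≤ σ)
    (hadapted : Adapted 𝓕 Z)
    (hint : ∀ (p : ℕ) (l : ℝ), Integrable (fun ω => Real.exp (l * Z p ω)) μ)
    (hcond : ∀ p : ℕ, 1 ≤ p → ∀ l : ℝ,
      μ[fun ω => Real.exp (l * Z p ω)|𝓕 (p - 1)] ≤ᵐ[μ]
        fun _ => Real.exp (l ^ 2 * σ ^ 2 / 2))
    (l : ℝ) (hl : 0 < l) (δ : ℝ) (hδ : δ ∈ Set.Ioo (0 : ℝ) 1) :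
    ENNReal.ofReal (1 - δ) ≤
      μ {ω | ∀ t : ℕ, 1 ≤ t →
        ∑ p ∈ Finset.Icc 1 t, Z p ω <
          (1 / l) * Real.log (1 / δ) + l * (t : ℝ) * σ ^ 2 / 2} := by
  obtain ⟨hδ0, hδ1⟩ := hδ
  set c : ℝ := l ^ 2 * σ ^ 2 / 2 with hc_def
  set S : ℕ → Ω → ℝ := fun t ω => ∑ p ∈ Finset.Icc 1 t, Z p ω with hS_def
  set M : ℕ → Ω → ℝ := fun t ω => Real.exp (l * S t ω - t * c) with hM_def
  have hMpos : ∀ t ω, 0 < M t ω := fun t ω => Real.exp_pos _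
  have hM0 : M 0 = fun _ => 1 := by
    funext ω; simp [hM_def, hS_def]
  have hSmeas : ∀ t, StronglyMeasurable[𝓕 t] (S t) := fun t =>
    Finset.stronglyMeasurable_fun_sum _ fun p hp =>
      (hadapted p).stronglyMeasurable.mono (𝓕.mono (Finset.mem_Icc.mp hp).2)
  have hMadp : StronglyAdapted 𝓕 M := fun t =>
    Real.continuous_exp.comp_stronglyMeasurable
      (((hSmeas t).const_mul l).sub stronglyMeasurable_const)
  have hstep : ∀ t, M (t + 1) = M t * fun ω => Real.exp (l * Z (t + 1) ω - c) := by
    intro t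
    funext ω
    have hsum : S (t + 1) ω = S t ω + Z (t + 1) ω := by
      simp only [hS_def]
      rw [Finset.sum_Icc_succ_top (Nat.one_le_iff_ne_zero.mpr (Nat.succ_ne_zero t))]
    simp only [Pi.mul_apply, hM_def, hsum, ← Real.exp_add]
    congr 1
    push_cast
    ring
  -- the conditional bound in the needed form
  have hg_int : ∀ t : ℕ, Integrable (fun ω => Real.exp (l * Z (t + 1) ω - c)) μ := by
    intro t
    have := (hint (t + 1) l).mul_const (Real.exp (-c))
    refine this.congr (Filter.Eventually.of_forall fun ω => ?_)
    simp [← Real.exp_add, sub_eq_add_neg]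
  have hg_cond : ∀ t : ℕ,
      μ[fun ω => Real.exp (l * Z (t + 1) ω - c)|𝓕 t] ≤ᵐ[μ] fun _ => (1 : ℝ) := by
    intro t
    have h1 := hcond (t + 1) (Nat.le_add_left 1 t) l
    have ht1 : (t + 1 : ℕ) - 1 = t := rfl
    rw [ht1] at h1
    have heq : (fun ω => Real.exp (l * Z (t + 1) ω - c)) =
        (Real.exp (-c)) • fun ω => Real.exp (l * Z (t + 1) ω) := by
      funext ω
      simp only [Pi.smul_apply, smul_eq_mul, ← Real.exp_add]
      congr 1
      ring
    rw [heq]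
    refine (condExp_smul (Real.exp (-c)) _ _).le.trans ?_
    filter_upwards [h1] with ω hω
    have : Real.exp (-c) * (μ[fun ω => Real.exp (l * Z (t + 1) ω)|𝓕 t]) ω ≤
        Real.exp (-c) * Real.exp (l ^ 2 * σ ^ 2 / 2) :=
      mul_le_mul_of_nonneg_left hω (Real.exp_nonneg _)
    simpa [← Real.exp_add, hc_def] using this
  have hMint : ∀ t, Integrable (M t) μ := by
    intro t
    induction t with
    | zero => rw [hM0]; exact integrable_const 1
    | succ t ih =>
      rw [hstep t]
      exact integrable_mul_of_condexp_le (𝓕.le t) (hMadp t) ih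
        (fun ω => (hMpos t ω).le) (hg_int t) (fun ω => Real.exp_nonneg _) (hg_cond t)
  have hsuper : Supermartingale M 𝓕 μ := by
    refine supermartingale_nat hMadp hMint fun t => ?_
    rw [hstep t]
    have h1 : μ[M t * fun ω => Real.exp (l * Z (t + 1) ω - c)|𝓕 t] =ᵐ[μ]
        M t * μ[fun ω => Real.exp (l * Z (t + 1) ω - c)|𝓕 t] :=
      condExp_mul_of_stronglyMeasurable_left (hMadp t) (by rw [← hstep t]; exact hMint (t + 1))
        (hg_int t)
    filter_upwards [h1, hg_cond t] with ω hω1 hω2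
    rw [hω1]
    calc M t ω * (μ[fun ω => Real.exp (l * Z (t + 1) ω - c)|𝓕 t]) ω
        ≤ M t ω * 1 := mul_le_mul_of_nonneg_left hω2 (hMpos t ω).le
      _ = M t ω := mul_one _
  -- Ville's inequality at each finite horizon
  set r : ℝ := 1 / δ with hr_def
  have hr1 : 1 < r := (one_lt_div hδ0).mpr hδ1
  have hr0 : 0 < r := lt_trans one_pos hr1
  set A : ℕ → Set Ω := fun n => {ω | ∃ k, k ≤ n ∧ r ≤ M k ω} with hA_def
  have hAbound : ∀ n, μ (A n) ≤ ENNReal.ofReal δ := by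
    intro n
    set τ : Ω → WithTop ℕ := fun ω => ((hittingBtwn M (Set.Ici r) 0 n ω : ℕ) : WithTop ℕ) with hτ_def
    have hτ : IsStoppingTime 𝓕 τ := hsuper.stronglyAdapted.adapted.isStoppingTime_hittingBtwn measurableSet_Ici
    have hτle : ∀ ω, τ ω ≤ n := fun ω => WithTop.coe_le_coe.mpr (hittingBtwn_le ω)
    have hsubm : Submartingale (-M) 𝓕 μ := hsuper.neg
    have hsv_int : Integrable (stoppedValue M τ) μ := by
      have := (hsubm.integrable_stoppedValue hτ hτle).neg
      refine this.congr (Filter.Eventually.of_forall fun ω => ?_)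
      simp [stoppedValue]
    have hsv_nonneg : ∀ ω, 0 ≤ stoppedValue M τ ω := fun ω => (hMpos _ ω).le
    have hsv_exp : ∫ ω, stoppedValue M τ ω ∂μ ≤ 1 := by
      have h := hsubm.expected_stoppedValue_mono (isStoppingTime_const 𝓕 0) hτ
        (fun ω => WithTop.coe_le_coe.mpr (Nat.zero_le _)) hτle
      have h0 : stoppedValue (-M) (fun _ => WithTop.some (0 : ℕ)) = fun ω => -(M 0 ω) := by
        funext ω; simp [stoppedValue]
      have hτv : stoppedValue (-M) τ = fun ω => -(stoppedValue M τ ω) := by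
        funext ω; simp [stoppedValue]
      rw [h0, hτv, integral_neg, integral_neg, neg_le_neg_iff] at h
      calc ∫ ω, stoppedValue M τ ω ∂μ ≤ ∫ ω, M 0 ω ∂μ := h
        _ = 1 := by rw [hM0]; simp
    have hA_subset : A n ⊆ {ω | r ≤ stoppedValue M τ ω} := by
      rintro ω ⟨k, hkn, hk⟩
      exact stoppedValue_hittingBtwn_mem ⟨k, ⟨Nat.zero_le _, hkn⟩, hk⟩
    have hmarkov := mul_meas_ge_le_integral_of_nonneg
      (Filter.Eventually.of_forall hsv_nonneg) hsv_int r
    have hμA_real : (μ (A n)).toReal ≤ δ := by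
      have h1 : (μ (A n)).toReal ≤ (μ {ω | r ≤ stoppedValue M τ ω}).toReal := by
        refine ENNReal.toReal_mono (measure_ne_top _ _) (measure_mono hA_subset)
      have h2 : r * (μ {ω | r ≤ stoppedValue M τ ω}).toReal ≤ 1 := hmarkov.trans hsv_exp
      have h3 : (μ {ω | r ≤ stoppedValue M τ ω}).toReal ≤ 1 / r := by
        rw [le_div_iff₀ hr0, mul_comm]; exact h2
      refine h1.trans (h3.trans (le_of_eq ?_))
      rw [hr_def]; field_simp
    calc μ (A n) = ENNReal.ofReal (μ (A n)).toReal :=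
        (ENNReal.ofReal_toReal (measure_ne_top _ _)).symm
      _ ≤ ENNReal.ofReal δ := ENNReal.ofReal_le_ofReal hμA_real
  -- assembling
  set G : Set Ω := {ω | ∀ t : ℕ, 1 ≤ t →
    ∑ p ∈ Finset.Icc 1 t, Z p ω <
      (1 / l) * Real.log (1 / δ) + l * (t : ℝ) * σ ^ 2 / 2} with hG_def
  have hGmeas : MeasurableSet G := by
    have : G = ⋂ t : ℕ, ⋂ (_ : 1 ≤ t), {ω | S t ω <
        (1 / l) * Real.log (1 / δ) + l * (t : ℝ) * σ ^ 2 / 2} := by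
      ext ω; simp [hG_def, hS_def]
    rw [this]
    exact MeasurableSet.iInter fun t => MeasurableSet.iInter fun _ =>
      measurableSet_lt (((hSmeas t).mono (𝓕.le t)).measurable) measurable_const
  have hGc : Gᶜ ⊆ ⋃ n, A n := by
    intro ω hω
    simp only [hG_def, Set.mem_compl_iff, Set.mem_setOf_eq, not_forall, not_lt] at hω
    obtain ⟨t, ht1, ht⟩ := hω
    refine Set.mem_iUnion.mpr ⟨t, t, le_rfl, ?_⟩
    -- from S t ω ≥ bound, deduce r ≤ M t ω
    have hlog : Real.log r ≤ l * S t ω - t * c := by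
      have h1 : l * ((1 / l) * Real.log (1 / δ) + l * (t : ℝ) * σ ^ 2 / 2) ≤ l * S t ω :=
        mul_le_mul_of_nonneg_left ht hl.le
      have h2 : l * ((1 / l) * Real.log (1 / δ) + l * (t : ℝ) * σ ^ 2 / 2) =
          Real.log r + t * c := by
        rw [hr_def, hc_def]
        field_simp
      linarith [h2 ▸ h1]
    calc r = Real.exp (Real.log r) := (Real.exp_log hr0).symm
      _ ≤ Real.exp (l * S t ω - t * c) := Real.exp_le_exp.mpr hlog
      _ = M t ω := rfl
  have hμGc : μ Gᶜ ≤ ENNReal.ofReal δ := by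
    have hmono : Monotone A := by
      intro a b hab ω ⟨k, hk, hkr⟩
      exact ⟨k, hk.trans hab, hkr⟩
    calc μ Gᶜ ≤ μ (⋃ n, A n) := measure_mono hGc
      _ = ⨆ n, μ (A n) := (hmono.directed_le).measure_iUnion
      _ ≤ ENNReal.ofReal δ := iSup_le hAbound
  have hcompl : μ Gᶜ = 1 - μ G := prob_compl_eq_one_sub hGmeas
  have h1 : (1 : ENNReal) - ENNReal.ofReal δ ≤ μ G := by
    rw [tsub_le_iff_right]
    calc (1 : ENNReal) = μ G + μ Gᶜ := by
          rw [hcompl, add_comm, tsub_add_cancel_of_le prob_le_one]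
      _ ≤ μ G + ENNReal.ofReal δ := add_le_add_right hμGc _
  calc ENNReal.ofReal (1 - δ) = 1 - ENNReal.ofReal δ := by
        rw [ENNReal.ofReal_sub _ hδ0.le, ENNReal.ofReal_one]
    _ ≤ μ G := h1
end

section
/- Let 𝒮 be a measurable space and 𝒜 a nonempty finite action set, let r : 𝒮 × 𝒜 → [0,1] be a measurable reward function and H ≥ 1 a horizon. For a transition model P̃ (a Markov kernel assigning to each (s,a) a probability measure P̃_a(s) on 𝒮), define its optimal value functions backward by Q_{H+1} = 0, V_h(s) = max_{a∈𝒜} Q_h(s,a), Q_h(s,a) = r(s,a) + ⟨P̃_a(s), V_{h+1}⟩, where ⟨μ, v⟩ = ∫ v dμ. Let P be the true transition model, let B be a set of transition models with P ∈ B, let P^k ∈ B with optimal value functions (V_{h,k})_{h} and Q-functions (Q_{h,k})_h, and suppose V*₁(s₁) ≤ V_{1,k}(s₁), where V* denotes the optimal value functions of P. Let s₁, …, s_H ∈ 𝒮 be any trajectory and let a_h ∈ argmax_{a∈𝒜} Q_{h,k}(s_h, a) for each h, and let π_k be the nonstationary Markov policy that is greedy with respect to (Q_{h,k})_h, with values V^{π_k}_h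 defined by V^{π_k}_{H+1} = 0 and V^{π_k}_h(s) = r(s, π_{k,h}(s)) + ⟨P_{π_{k,h}(s)}(s), V^{π_k}_{h+1}⟩. Then: V*₁(s₁) − V^{π_k}₁(s₁) ≤ sup_{P̃∈B} Σ_{h=1}^{H−1} ⟨ P̃_{a_h}(s_h) − P_{a_h}(s_h), V_{h+1,k} ⟩ + Σ_{h=1}^{H−1} ξ_{h+1,k}, where ξ_{h+1,k} = ⟨ P_{a_h}(s_h), V_{h+1,k} − V^{π_k}_{h+1} ⟩ − ( V_{h+1,k}(s_{h+1}) − V^{π_k}_{h+1}(s_{h+1}) ). -/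
open MeasureTheory Finset

/-- **Optimism-based regret decomposition for a single episode**
(Lemma 1 in the paper). Let `P` be the true transition model, `B` a set of
transition models containing `P`, and `Pk ∈ B` an (optimistic) model whose
optimal value functions `Vk, Qk` satisfy `V*₁ (s₁) ≤ Vk 1 (s₁)` where
`V*` is the optimal value function of `P`. Let `πk` be greedy with respect to
`Qk`, let `(s h)` be a trajectory with actions `a h = πk h (s h)` (so
`a h ∈ argmax Qk h (s h)`), and let `Vπ` be the value function of `πk` under
`P`. Then `V*₁ (s₁) - Vπ 1 (s₁)` is at most
`sup_{P̃ ∈ B} ∑_{h=1}^{H-1} ⟨P̃_{a h}(s h) - P_{a h}(s h), Vk (h+1)⟩`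
plus the sum of the martingale differences
`ξ (h+1) = ⟨P_{a h}(s h), Vk (h+1) - Vπ (h+1)⟩ - (Vk (h+1) (s (h+1)) - Vπ (h+1) (s (h+1)))`. -/
theorem optimistic_regret_decomposition
    {S : Type*} [MeasurableSpace S] {A : Type*} [Fintype A] [Nonempty A]
    (r : S → A → ℝ) (hr : ∀ s a, r s a ∈ Set.Icc (0 : ℝ) 1)
    (H : ℕ) (hH : 1 ≤ H)
    (P : S → A → Measure S) (hP : ∀ s a, IsProbabilityMeasure (P s a))
    (B : Set (S → A → Measure S))
    (hBprob : ∀ Pt ∈ B, ∀ (s : S) (a : A), IsProbabilityMeasure (Pt s a))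
    (hPB : P ∈ B)
    (Pk : S → A → Measure S) (hPkB : Pk ∈ B)
    -- optimal value functions of the true model `P`
    (Qstar : ℕ → S → A → ℝ) (Vstar : ℕ → S → ℝ)
    (hQstarTop : ∀ s a, Qstar (H + 1) s a = 0)
    (hVstar : ∀ h s, Vstar h s = ⨆ a : A, Qstar h s a)
    (hQstar : ∀ h, 1 ≤ h → h ≤ H → ∀ s a,
      Qstar h s a = r s a + ∫ y, Vstar (h + 1) y ∂(P s a))
    -- optimal value functions of the optimistic model `Pk`
    (Qk : ℕ → S → A → ℝ) (Vk : ℕ → S → ℝ)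
    (hQkTop : ∀ s a, Qk (H + 1) s a = 0)
    (hVk : ∀ h s, Vk h s = ⨆ a : A, Qk h s a)
    (hQk : ∀ h, 1 ≤ h → h ≤ H → ∀ s a,
      Qk h s a = r s a + ∫ y, Vk (h + 1) y ∂(Pk s a))
    (hVkMeas : ∀ h, Measurable (Vk h))
    (hVkBdd : ∀ h s, |Vk h s| ≤ H)
    -- the greedy policy `πk` and its value functions under the true model
    (πk : ℕ → S → A)
    (hgreedy : ∀ h s, ∀ a : A, Qk h s a ≤ Qk h s (πk h s))
    (Vπ : ℕ → S → ℝ)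
    (hVπTop : ∀ s, Vπ (H + 1) s = 0)
    (hVπ : ∀ h, 1 ≤ h → h ≤ H → ∀ s,
      Vπ h s = r s (πk h s) + ∫ y, Vπ (h + 1) y ∂(P s (πk h s)))
    (hVπMeas : ∀ h, Measurable (Vπ h))
    (hVπBdd : ∀ h s, |Vπ h s| ≤ H)
    -- the trajectory and its greedy actions
    (st : ℕ → S) (act : ℕ → A) (hact : ∀ h, act h = πk h (st h))
    -- optimism
    (hopt : Vstar 1 (st 1) ≤ Vk 1 (st 1)) :
    Vstar 1 (st 1) - Vπ 1 (st 1) ≤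
      sSup {w : ℝ | ∃ Pt ∈ B, w = ∑ h ∈ Finset.Icc 1 (H - 1),
          ((∫ y, Vk (h + 1) y ∂(Pt (st h) (act h))) -
            ∫ y, Vk (h + 1) y ∂(P (st h) (act h)))} +
        ∑ h ∈ Finset.Icc 1 (H - 1),
          ((∫ y, (Vk (h + 1) y - Vπ (h + 1) y) ∂(P (st h) (act h))) -
            (Vk (h + 1) (st (h + 1)) - Vπ (h + 1) (st (h + 1)))) := by
    -- abbreviations
  set b : ℕ → ℝ := fun h => (∫ y, Vk (h + 1) y ∂(Pk (st h) (act h))) -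
      ∫ y, Vk (h + 1) y ∂(P (st h) (act h)) with hb
  set ξ : ℕ → ℝ := fun h => (∫ y, (Vk (h + 1) y - Vπ (h + 1) y) ∂(P (st h) (act h))) -
      (Vk (h + 1) (st (h + 1)) - Vπ (h + 1) (st (h + 1))) with hξ
  -- Vk at horizon H+1 is zero
  have hVkTop : ∀ s, Vk (H + 1) s = 0 := by
    intro s; rw [hVk]; simp [hQkTop]
  -- integrability of Vk, Vπ
  have hIntk : ∀ (μ : Measure S), IsProbabilityMeasure μ → ∀ h, Integrable (Vk h) μ := by
    intro μ hμ h
    haveI := hμ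
    exact (integrable_const (H : ℝ)).mono' (hVkMeas h).aestronglyMeasurable
      (Filter.Eventually.of_forall fun y => by simpa using hVkBdd h y)
  have hIntπ : ∀ (μ : Measure S), IsProbabilityMeasure μ → ∀ h, Integrable (Vπ h) μ := by
    intro μ hμ h
    haveI := hμ
    exact (integrable_const (H : ℝ)).mono' (hVπMeas h).aestronglyMeasurable
      (Filter.Eventually.of_forall fun y => by simpa using hVπBdd h y)
  have hIntBd : ∀ (μ : Measure S), IsProbabilityMeasure μ → ∀ h, |∫ y, Vk h y ∂μ| ≤ H := by
    intro μ hμ h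
    haveI := hμ
    have e1 : |∫ y, Vk h y ∂μ| ≤ ∫ y, |Vk h y| ∂μ := by
      simpa [Real.norm_eq_abs] using norm_integral_le_integral_norm (μ := μ) (Vk h)
    have e2 : ∫ y, |Vk h y| ∂μ ≤ ∫ _y, (H : ℝ) ∂μ :=
      integral_mono (hIntk μ hμ h).abs (integrable_const _) (fun y => hVkBdd h y)
    have e3 : ∫ _y, (H : ℝ) ∂μ = (H : ℝ) := by simp
    linarith
  -- Vk at st h equals Qk at the greedy action
  have hVkmax : ∀ h, Vk h (st h) = Qk h (st h) (act h) := by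
    intro h
    rw [hVk, hact]
    refine le_antisymm (ciSup_le fun a => hgreedy h (st h) a) ?_
    exact le_ciSup (Set.Finite.bddAbove (Set.finite_range _)) _
  -- key telescoping identity
  have key : ∀ n h, h + n = H + 1 → 1 ≤ h →
      Vk h (st h) - Vπ h (st h) = ∑ j ∈ Finset.Icc h H, (b j + ξ j) := by
    intro n
    induction n with
    | zero =>
      intro h hh _
      simp only [Nat.add_zero] at hh
      subst hh
      rw [hVkTop, hVπTop]
      rw [Finset.Icc_eq_empty (by omega)]
      simp
    | succ n ih =>
      intro h hh h1
      have hhH : h ≤ H := by omega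
      have hsplit : ∫ y, (Vk (h + 1) y - Vπ (h + 1) y) ∂(P (st h) (act h)) =
          (∫ y, Vk (h + 1) y ∂(P (st h) (act h))) - ∫ y, Vπ (h + 1) y ∂(P (st h) (act h)) :=
        integral_sub (hIntk _ (hP _ _) _) (hIntπ _ (hP _ _) _)
      have step : Vk h (st h) - Vπ h (st h) =
          b h + ξ h + (Vk (h + 1) (st (h + 1)) - Vπ (h + 1) (st (h + 1))) := by
        rw [hVkmax h, hQk h h1 hhH, hVπ h h1 hhH, hb, hξ]
        simp only
        rw [hsplit, hact]
        ring
      rw [step, ih (h + 1) (by omega) (by omega)]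
      rw [show Finset.Icc h H = insert h (Finset.Icc (h + 1) H) by
        ext x; simp only [Finset.mem_Icc, Finset.mem_insert]; omega]
      rw [Finset.sum_insert (by simp)]
  have hkey1 : Vk 1 (st 1) - Vπ 1 (st 1) = ∑ j ∈ Finset.Icc 1 H, (b j + ξ j) := key H 1 (by omega) le_rfl
  -- the top term (j = H) vanishes
  have hbH : b H = 0 := by
    rw [hb]; simp only [hVkTop]; simp
  have hξH : ξ H = 0 := by
    rw [hξ]; simp only [hVkTop, hVπTop]; simp
  have hIccH : Finset.Icc 1 H = insert H (Finset.Icc 1 (H - 1)) := by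
    ext x; simp only [Finset.mem_Icc, Finset.mem_insert]; omega
  have hsum : Vk 1 (st 1) - Vπ 1 (st 1) =
      (∑ j ∈ Finset.Icc 1 (H - 1), b j) + ∑ j ∈ Finset.Icc 1 (H - 1), ξ j := by
    rw [hkey1, hIccH, Finset.sum_insert (by simp only [Finset.mem_Icc]; omega), hbH, hξH]
    rw [Finset.sum_add_distrib]
    ring
  -- bound the b-sum by the sup over B
  have hmem : (∑ j ∈ Finset.Icc 1 (H - 1), b j) ∈
      {w : ℝ | ∃ Pt ∈ B, w = ∑ h ∈ Finset.Icc 1 (H - 1),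
          ((∫ y, Vk (h + 1) y ∂(Pt (st h) (act h))) -
            ∫ y, Vk (h + 1) y ∂(P (st h) (act h)))} := ⟨Pk, hPkB, rfl⟩
  have hbdd : BddAbove {w : ℝ | ∃ Pt ∈ B, w = ∑ h ∈ Finset.Icc 1 (H - 1),
          ((∫ y, Vk (h + 1) y ∂(Pt (st h) (act h))) -
            ∫ y, Vk (h + 1) y ∂(P (st h) (act h)))} := by
    refine ⟨∑ _h ∈ Finset.Icc 1 (H - 1), (2 * (H : ℝ)), ?_⟩
    rintro w ⟨Pt, hPt, rfl⟩
    refine Finset.sum_le_sum fun h _ => ?_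
    have h1 := hIntBd _ (hBprob Pt hPt (st h) (act h)) (h + 1)
    have h2 := hIntBd _ (hP (st h) (act h)) (h + 1)
    have := abs_sub_abs_le_abs_sub (∫ y, Vk (h + 1) y ∂(Pt (st h) (act h)))
      (∫ y, Vk (h + 1) y ∂(P (st h) (act h)))
    calc (∫ y, Vk (h + 1) y ∂(Pt (st h) (act h))) - ∫ y, Vk (h + 1) y ∂(P (st h) (act h))
        ≤ |∫ y, Vk (h + 1) y ∂(Pt (st h) (act h))| + |∫ y, Vk (h + 1) y ∂(P (st h) (act h))| := by
          have := abs_sub ((∫ y, Vk (h + 1) y ∂(Pt (st h) (act h))))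
            (∫ y, Vk (h + 1) y ∂(P (st h) (act h)))
          exact (le_abs_self _).trans (abs_sub _ _)
      _ ≤ 2 * (H : ℝ) := by linarith
  have hle : (∑ j ∈ Finset.Icc 1 (H - 1), b j) ≤
      sSup {w : ℝ | ∃ Pt ∈ B, w = ∑ h ∈ Finset.Icc 1 (H - 1),
          ((∫ y, Vk (h + 1) y ∂(Pt (st h) (act h))) -
            ∫ y, Vk (h + 1) y ∂(P (st h) (act h)))} := le_csSup hbdd hmem
  have : Vstar 1 (st 1) - Vπ 1 (st 1) ≤
      (∑ j ∈ Finset.Icc 1 (H - 1), b j) + ∑ j ∈ Finset.Icc 1 (H - 1), ξ j := by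
    have := hsum; linarith
  calc Vstar 1 (st 1) - Vπ 1 (st 1)
      ≤ (∑ j ∈ Finset.Icc 1 (H - 1), b j) + ∑ j ∈ Finset.Icc 1 (H - 1), ξ j := this
    _ ≤ _ := add_le_add_left hle _
end
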